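/- Let (A, +) be a nontrivial finite abelian group, k ≥ 1, and let B(k, A) be the group generated by the tree automorphisms {𝒜_q : q ∈ A^k} of the Mealy automaton M(B_k(A), χ_k(A)). Then B(k, A) is isomorphic to the wreath product A^k ≀ ℤ, i.e., (⊕_{ℤ} A^k) ⋊ ℤ where ℤ acts by shifting coordinates. -/

import Mathlib

/-- The sequential transformation of `A*` induced by a state of a Mealy automaton. -/
def mealyMap {Q A : Type*} (δ : Q → A → Q) (lam : Q → A → A) : Q → List A → List A
  | _, [] => []
  | q, a :: u => lam q a :: mealyMap δ lam (δ q a) u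

/-- The transition function of the De Bruijn automaton of order `k`. -/
def dbStep (A : Type*) (k : ℕ) (q : Fin k → A) (x : A) : Fin k → A :=
  fun i => if h : (i : ℕ) + 1 < k then q ⟨(i : ℕ) + 1, h⟩ else x

/-- The wreath product `A^k ≀ ℤ`, that is, `(⊕_ℤ A^k) ⋊ ℤ` where `ℤ` acts by shifting
the coordinates. -/
abbrev wreathAkZ (A : Type*) [AddCommGroup A] (k : ℕ) :=
  SemidirectProduct (Multiplicative (ℤ →₀ (Fin k → A))) (Multiplicative ℤ)
    (zpowersHom _
      (AddEquiv.toMultiplicative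
        (Finsupp.domCongr (M := Fin k → A) (Equiv.addRight (1 : ℤ)))))

namespace Stmt19

instance addAutGroup (M : Type*) [Add M] : Group (AddAut M) where
  mul g h := AddEquiv.trans h g
  one := AddEquiv.refl _
  inv := AddEquiv.symm
  mul_assoc _ _ _ := rfl
  one_mul _ := rfl
  mul_one _ := rfl
  inv_mul_cancel := AddEquiv.self_trans_symm

@[simp]
lemma AddAut.mul_apply {M : Type*} [Add M] (e₁ e₂ : AddAut M) (m : M) :
    (e₁ * e₂) m = e₁ (e₂ m) := rfl

@[simp]
lemma AddAut.one_apply {M : Type*} [Add M] (m : M) : (1 : AddAut M) m = m := rfl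

@[simp]
lemma AddAut.coe_one {M : Type*} [Add M] : ⇑(1 : AddAut M) = id := rfl

variable {A : Type*} [AddCommGroup A] (k : ℕ)

/-- multiplication by `t^k` on power series `ℕ → A`. -/
def shk (F : ℕ → A) : ℕ → A := fun n => if k ≤ n then F (n - k) else 0

/-- multiplication by `1 - t^k`. -/
def sigFun (F : ℕ → A) : ℕ → A := fun n => F n - shk k F n

/-- multiplication by `(1 - t^k)⁻¹`. -/
def tauFun (F : ℕ → A) : ℕ → A := fun n => ∑ j ∈ Finset.range (n / k + 1), F (n - j * k)

variable [NeZero k]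

lemma kpos : 0 < k := Nat.pos_of_ne_zero (NeZero.ne k)

lemma sig_inj : Function.Injective (sigFun (A := A) k) := by
  intro F G h
  funext n
  induction n using Nat.strong_induction_on with
  | _ n ih =>
    have h1 : sigFun k F n = sigFun k G n := congrFun h n
    simp only [sigFun, shk] at h1
    by_cases hk : k ≤ n
    · simp only [hk, if_true] at h1
      have : F (n - k) = G (n - k) := ih _ (by have := kpos k; omega)
      rw [this] at h1
      linear_combination (norm := abel) h1
    · simpa [hk] using h1

lemma sig_tau (F : ℕ → A) : sigFun k (tauFun k F) = F := by
  funext n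
  simp only [sigFun, tauFun, shk]
  by_cases hk : k ≤ n
  · have hd : n / k = (n - k) / k + 1 := Nat.div_eq_sub_div (kpos k) hk
    simp only [hk, if_true]
    rw [hd, Finset.sum_range_succ']
    have : ∀ j, n - (j + 1) * k = n - k - j * k := by intro j; ring_nf; omega
    simp only [this, Nat.sub_zero, Nat.zero_mul]
    abel
  · have hd : n / k = 0 := Nat.div_eq_of_lt (by omega)
    simp [hk, hd]

/-- `1 - t^k` as an additive automorphism. -/
def sig : AddAut (ℕ → A) :=
  { toFun := sigFun k
    invFun := tauFun k
    left_inv := fun F => sig_inj k (by rw [sig_tau])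
    right_inv := sig_tau k
    map_add' := fun F G => by
      funext n
      simp only [sigFun, shk, Pi.add_apply]
      split <;> abel }

lemma sig_apply (F : ℕ → A) : sig k F = sigFun k F := rfl

lemma sig_symm_apply (F : ℕ → A) : (sig k)⁻¹ F = tauFun k F := rfl

/-- Locality: the operator only looks at coefficients of index `≤ n`. -/
def Loc (g : (ℕ → A) → (ℕ → A)) : Prop :=
  ∀ (n : ℕ) (F F' : ℕ → A), (∀ m ≤ n, F m = F' m) → g F n = g F' n

lemma loc_id : Loc (id : (ℕ → A) → _) := fun n F F' h => h n le_rfl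

lemma loc_comp {g h : (ℕ → A) → (ℕ → A)} (hg : Loc g) (hloc : ∀ n F F', (∀ m ≤ n, F m = F' m) → ∀ m ≤ n, h F m = h F' m) : Loc (g ∘ h) := by
  intro n F F' hFF
  exact hg n (h F) (h F') (hloc n F F' hFF)

lemma loc_sig : Loc (sigFun (A := A) k) := by
  intro n F F' h
  simp only [sigFun, shk]
  rw [h n le_rfl]
  split
  · rw [h (n - k) (Nat.sub_le n k)]
  · rfl

lemma loc_tau : Loc (tauFun (A := A) k) := by
  intro n F F' h
  simp only [tauFun]
  exact Finset.sum_congr rfl fun j _ => h _ (Nat.sub_le n _)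

/-- locality is really "strong" locality for our operators -/
lemma loc_strong {g : (ℕ → A) → (ℕ → A)} (hg : Loc g) :
    ∀ n F F', (∀ m ≤ n, F m = F' m) → ∀ m ≤ n, g F m = g F' m :=
  fun n F F' h m hm => hg m F F' fun l hl => h l (hl.trans hm)

lemma loc_zpow (z : ℤ) : Loc (⇑(sig (A := A) k ^ z)) := by
  induction z using Int.induction_on with
  | zero => simpa using loc_id
  | succ i ih =>
      have : (sig (A := A) k ^ ((i : ℤ) + 1)) = sig k ^ (i : ℤ) * sig k := by
        rw [zpow_add_one]
      rw [this]
      intro n F F' h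
      simp only [AddAut.mul_apply]
      exact ih n _ _ (loc_strong (loc_sig k) n F F' h)
  | pred i ih =>
      have : (sig (A := A) k ^ (-(i : ℤ) - 1)) = sig k ^ (-(i : ℤ)) * (sig k)⁻¹ := by
        rw [zpow_sub_one]
      rw [this]
      intro n F F' h
      simp only [AddAut.mul_apply]
      refine ih n _ _ ?_
      have : Loc (⇑(sig (A:=A) k)⁻¹) := loc_tau k
      exact loc_strong this n F F' h



/-- the polynomial `q₀ + q₁ t + ⋯ + q_{k-1} t^{k-1}` -/
def poly : (Fin k → A) →+ (ℕ → A) where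
  toFun q := fun n => if h : n < k then q ⟨n, h⟩ else 0
  map_zero' := by funext n; simp only [Pi.zero_apply]; split <;> rfl
  map_add' q p := by funext n; simp only [Pi.add_apply]; split <;> simp

/-- the map `f ↦ ∑ₘ (1-t^k)^m F_{f m}` -/
noncomputable def Gmap : (ℤ →₀ (Fin k → A)) →+ (ℕ → A) :=
  Finsupp.liftAddHom fun m => ((sig k ^ m : AddAut (ℕ → A)) : (ℕ → A) ≃+ (ℕ → A)).toAddMonoidHom.comp (poly k)

lemma Gmap_single (m : ℤ) (q : Fin k → A) :
    Gmap k (Finsupp.single m q) = (sig k ^ m) (poly k q) := by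
  simp only [Gmap, Finsupp.liftAddHom_apply_single]
  rfl

lemma Gmap_apply (f : ℤ →₀ (Fin k → A)) :
    Gmap k f = f.sum fun m q => (sig k ^ m) (poly k q) := by
  rw [Gmap, Finsupp.liftAddHom_apply]; rfl

lemma Gmap_shift (n : ℤ) (f : ℤ →₀ (Fin k → A)) :
    Gmap k (Finsupp.domCongr (M := Fin k → A) (Equiv.addRight n) f) = (sig k ^ n) (Gmap k f) := by
  have : (Gmap k).comp ((Finsupp.domCongr (M := Fin k → A) (Equiv.addRight n)).toAddMonoidHom)
      = (((sig k ^ n : AddAut (ℕ → A)) : (ℕ → A) ≃+ (ℕ → A)).toAddMonoidHom).comp (Gmap k) := by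
    apply Finsupp.addHom_ext
    intro m q
    simp only [AddMonoidHom.comp_apply, AddEquiv.coe_toAddMonoidHom, Finsupp.domCongr_apply,
      Finsupp.equivMapDomain_single, Equiv.coe_addRight, Gmap_single]
    rw [← AddAut.mul_apply, ← zpow_add, add_comm]
  exact DFunLike.congr_fun this f


/-- the automorphism `ψ` used to build the wreath product -/
noncomputable abbrev psi : Multiplicative (ℤ →₀ (Fin k → A)) ≃* Multiplicative (ℤ →₀ (Fin k → A)) :=
  AddEquiv.toMultiplicative (Finsupp.domCongr (M := Fin k → A) (Equiv.addRight (1 : ℤ)))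

lemma psi_apply (g : Multiplicative (ℤ →₀ (Fin k → A))) :
    Multiplicative.toAdd (psi k g) =
      Finsupp.domCongr (M := Fin k → A) (Equiv.addRight (1 : ℤ)) (Multiplicative.toAdd g) := rfl

lemma domCongr_comp (n m : ℤ) (f : ℤ →₀ (Fin k → A)) :
    Finsupp.domCongr (M := Fin k → A) (Equiv.addRight n)
        (Finsupp.domCongr (M := Fin k → A) (Equiv.addRight m) f)
      = Finsupp.domCongr (M := Fin k → A) (Equiv.addRight (m + n)) f := by
  ext b
  simp only [Finsupp.domCongr_apply, Finsupp.equivMapDomain_apply]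
  congr 1
  simp only [Equiv.addRight_symm_apply]
  ring

lemma domCongr_congr {n m : ℤ} (h : n = m) (f : ℤ →₀ (Fin k → A)) :
    Finsupp.domCongr (M := Fin k → A) (Equiv.addRight n) f
      = Finsupp.domCongr (M := Fin k → A) (Equiv.addRight m) f := by rw [h]

lemma domCongr_zero (f : ℤ →₀ (Fin k → A)) :
    Finsupp.domCongr (M := Fin k → A) (Equiv.addRight (0 : ℤ)) f = f := by
  ext b
  simp [Finsupp.equivMapDomain_apply]
  rfl

lemma psi_pow_nat (i : ℕ) (g : Multiplicative (ℤ →₀ (Fin k → A))) :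
    Multiplicative.toAdd (((psi k : MulAut (Multiplicative (ℤ →₀ (Fin k → A)))) ^ (i : ℤ)) g) =
      Finsupp.domCongr (M := Fin k → A) (Equiv.addRight (i : ℤ)) (Multiplicative.toAdd g) := by
  induction i generalizing g with
  | zero => rw [Int.natCast_zero, zpow_zero, domCongr_zero]; rfl
  | succ i ih =>
      rw [show ((i + 1 : ℕ) : ℤ) = (i : ℤ) + 1 by push_cast; ring, zpow_add_one, MulAut.mul_apply,
        ih, psi_apply, domCongr_comp]
      exact domCongr_congr k (by ring) _

lemma psi_pow (n : ℤ) (g : Multiplicative (ℤ →₀ (Fin k → A))) :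
    Multiplicative.toAdd (((psi k : MulAut (Multiplicative (ℤ →₀ (Fin k → A)))) ^ n) g) =
      Finsupp.domCongr (M := Fin k → A) (Equiv.addRight n) (Multiplicative.toAdd g) := by
  rcases le_or_gt 0 n with hn | hn
  · obtain ⟨i, rfl⟩ := Int.eq_ofNat_of_zero_le hn
    exact psi_pow_nat k i g
  · obtain ⟨i, rfl⟩ : ∃ i : ℕ, n = -(i : ℤ) := ⟨n.natAbs, by omega⟩
    set P : MulAut (Multiplicative (ℤ →₀ (Fin k → A))) := psi k
    have key : ((P ^ (i : ℤ)) ((P ^ (-(i:ℤ))) g)) = g := by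
      rw [← MulAut.mul_apply, ← zpow_add]
      norm_num
    have h1 := psi_pow_nat k i ((P ^ (-(i:ℤ))) g)
    rw [key] at h1
    rw [h1]
    rw [domCongr_comp k, domCongr_congr k (show (i:ℤ) + -(i:ℤ) = 0 by ring), domCongr_zero]


/-! ### The action on power series and on words -/

variable {A : Type*} [AddCommGroup A] (k : ℕ) [NeZero k]

/-- the wreath product homomorphism into MulAut defining `wreathAkZ` -/
noncomputable abbrev wphi : Multiplicative ℤ →* MulAut (Multiplicative (ℤ →₀ (Fin k → A))) :=
  zpowersHom _
    (AddEquiv.toMultiplicative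
      (Finsupp.domCongr (M := Fin k → A) (Equiv.addRight (1 : ℤ))))

/-- The affine action of a wreath product element on power series. -/
noncomputable def Tact (g : SemidirectProduct (Multiplicative (ℤ →₀ (Fin k → A))) (Multiplicative ℤ) (wphi k))
    (F : ℕ → A) : ℕ → A :=
  (sig k ^ (Multiplicative.toAdd g.right)) F - Gmap k (Multiplicative.toAdd g.left)

lemma Tact_one (F : ℕ → A) : Tact k 1 F = F := by
  simp [Tact]

lemma Tact_mul (g h : SemidirectProduct (Multiplicative (ℤ →₀ (Fin k → A)))
    (Multiplicative ℤ) (wphi k)) (F : ℕ → A) :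
    Tact k (g * h) F = Tact k g (Tact k h F) := by
  have hleft : Multiplicative.toAdd (g * h).left
      = Multiplicative.toAdd g.left + Multiplicative.toAdd (wphi k g.right h.left) := rfl
  have hright : Multiplicative.toAdd (g * h).right
      = Multiplicative.toAdd g.right + Multiplicative.toAdd h.right := rfl
  have hphi : Gmap k (Multiplicative.toAdd (wphi k g.right h.left))
      = (sig k ^ (Multiplicative.toAdd g.right)) (Gmap k (Multiplicative.toAdd h.left)) := by
    rw [show wphi k g.right h.left
        = ((psi k : MulAut (Multiplicative (ℤ →₀ (Fin k → A)))) ^ (Multiplicative.toAdd g.right))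
            h.left from rfl,
      psi_pow, Gmap_shift]
  simp only [Tact, hleft, hright, map_add, hphi]
  rw [zpow_add, AddAut.mul_apply, map_sub]
  abel

lemma Tact_loc (g : SemidirectProduct (Multiplicative (ℤ →₀ (Fin k → A)))
    (Multiplicative ℤ) (wphi k)) : Loc (Tact k g) := by
  intro n F F' h
  simp only [Tact, Pi.sub_apply]
  rw [loc_zpow k (Multiplicative.toAdd g.right) n F F' h]

/-- extension of a word by zeros -/
def ext (u : List A) : ℕ → A := fun n => u.getD n 0

lemma ext_lt (u : List A) (m : ℕ) (h : m < u.length) : ext u m = u[m] :=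
  List.getD_eq_getElem u 0 h

/-- The action of a wreath product element on words. -/
noncomputable def lact (g : SemidirectProduct (Multiplicative (ℤ →₀ (Fin k → A)))
    (Multiplicative ℤ) (wphi k)) (u : List A) : List A :=
  List.ofFn fun i : Fin u.length => Tact k g (ext u) i

lemma lact_length (g) (u : List A) : (lact k g u).length = u.length := by
  simp [lact]

lemma lact_getElem (g) (u : List A) (m : ℕ) (h : m < (lact k g u).length) :
    (lact k g u)[m] = Tact k g (ext u) m := by
  simp only [lact] at h ⊢
  rw [List.getElem_ofFn]

lemma lact_one (u : List A) : lact k 1 u = u := by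
  apply List.ext_getElem (by simp [lact_length])
  intro m h1 h2
  rw [lact_getElem, Tact_one, ext_lt u m h2]

lemma lact_mul (g h) (u : List A) :
    lact k (g * h) u = lact k g (lact k h u) := by
  apply List.ext_getElem (by simp [lact_length])
  intro m hm1 hm2
  rw [lact_getElem, lact_getElem, Tact_mul]
  refine Tact_loc k g m _ _ fun l hl => ?_
  have hl2 : l < (lact k h u).length := by
    rw [lact_length] at hm2 ⊢
    rw [lact_length] at hm2
    omega
  rw [ext_lt _ l hl2, lact_getElem]

/-- The homomorphism from the wreath product to permutations of words. -/
noncomputable def phiMap : SemidirectProduct (Multiplicative (ℤ →₀ (Fin k → A)))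
    (Multiplicative ℤ) (wphi k) →* Equiv.Perm (List A) :=
  MonoidHom.mk'
    (fun g =>
      { toFun := lact k g
        invFun := lact k g⁻¹
        left_inv := fun u => by rw [← lact_mul, inv_mul_cancel, lact_one]
        right_inv := fun u => by rw [← lact_mul, mul_inv_cancel, lact_one] })
    (fun g h => Equiv.ext fun u => lact_mul k g h u)

lemma phiMap_apply (g) (u : List A) : phiMap k g u = lact k g u := rfl


/-! ### The Mealy machine computes the affine action of the generators -/

/-- closed form for the De Bruijn Mealy transformation -/
def mealyF (q : Fin k → A) (F : ℕ → A) : ℕ → A :=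
  fun n => F n - if h : n < k then q ⟨n, h⟩ else F (n - k)

lemma ext_cons_succ (a : A) (u : List A) (n : ℕ) : ext (a :: u) (n + 1) = ext u n := by
  simp [ext]

lemma ext_cons_zero (a : A) (u : List A) : ext (a :: u) 0 = a := rfl

lemma mealy_closed_form (u : List A) : ∀ q : Fin k → A,
    mealyMap (dbStep A k) (fun p x => x - p 0) q u
      = List.ofFn (fun i : Fin u.length => mealyF k q (ext u) i) := by
  induction u with
  | nil => intro q; rfl
  | cons a u ih =>
      intro q
      have hk0 : 0 < k := kpos k
      rw [show (a :: u).length = u.length + 1 from rfl, List.ofFn_succ]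
      show (a - q 0) :: mealyMap (dbStep A k) (fun p x => x - p 0) (dbStep A k q a) u = _
      rw [ih (dbStep A k q a)]
      congr 1
      · simp only [mealyF, ext_cons_zero]
        split
        · rfl
        · exact absurd hk0 ‹_›
      · refine congrArg List.ofFn (funext fun i => ?_)
        simp only [Fin.val_succ, mealyF, ext_cons_succ]
        congr 1
        by_cases h1 : (i : ℕ) + 1 < k
        · have h2 : (i : ℕ) < k := by omega
          rw [dif_pos h1, dif_pos h2]
          simp only [dbStep, h1, dif_pos]
        · by_cases h2 : (i : ℕ) < k
          · have h3 : (i : ℕ) + 1 - k = 0 := by omega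
            rw [dif_neg h1, dif_pos h2, h3, ext_cons_zero]
            simp only [dbStep, h1, dif_neg, not_false_iff]
          · have h3 : (i : ℕ) + 1 - k = ((i : ℕ) - k) + 1 := by omega
            rw [dif_neg h1, dif_neg h2, h3, ext_cons_succ]

/-- the generators of the wreath product -/
noncomputable def gen (q : Fin k → A) :
    SemidirectProduct (Multiplicative (ℤ →₀ (Fin k → A))) (Multiplicative ℤ) (wphi k) :=
  ⟨Multiplicative.ofAdd (Finsupp.single 0 q), Multiplicative.ofAdd 1⟩

lemma Tact_gen (q : Fin k → A) (F : ℕ → A) : Tact k (gen k q) F = mealyF k q F := by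
  funext n
  have h1 : (sig k ^ (1 : ℤ)) F = sigFun k F := by rw [zpow_one]; rfl
  have h2 : Gmap k (Finsupp.single (0:ℤ) q) = poly k q := by
    rw [Gmap_single, zpow_zero]; rfl
  show (sig k ^ (Multiplicative.toAdd (Multiplicative.ofAdd (1:ℤ)))) F n
      - Gmap k (Multiplicative.toAdd (Multiplicative.ofAdd (Finsupp.single (0:ℤ) q))) n = _
  rw [show Multiplicative.toAdd (Multiplicative.ofAdd (1:ℤ)) = (1:ℤ) from rfl,
    show Multiplicative.toAdd (Multiplicative.ofAdd (Finsupp.single (0:ℤ) q))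
      = Finsupp.single (0:ℤ) q from rfl, h1, h2]
  simp only [mealyF, sigFun, shk, poly, AddMonoidHom.coe_mk, ZeroHom.coe_mk]
  by_cases h : n < k
  · rw [dif_pos h, if_neg (by omega), dif_pos h]
    abel
  · rw [dif_neg h, if_pos (by omega), dif_neg h]
    abel

lemma phiMap_gen (e : (Fin k → A) → Equiv.Perm (List A))
    (he : ∀ (q : Fin k → A) (u : List A),
      e q u = mealyMap (dbStep A k) (fun p x => x - p 0) q u) (q : Fin k → A) :
    phiMap k (gen k q) = e q := by
  apply Equiv.ext
  intro u
  rw [phiMap_apply, he q u, mealy_closed_form]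
  unfold lact
  refine congrArg List.ofFn (funext fun i => ?_)
  rw [Tact_gen]


/-! ### Injectivity of `phiMap` -/

lemma neg_one_pow_smul_ne_zero {a : A} (ha : a ≠ 0) (m : ℕ) : ((-1:ℤ)^m) • a ≠ 0 := by
  intro h
  apply ha
  have h2 := congrArg (fun x : A => ((-1:ℤ)^m) • x) h
  simp only [smul_smul, smul_zero] at h2
  rw [← mul_pow, neg_mul_neg, one_mul, one_pow, one_smul] at h2
  exact h2

lemma sig_pow_delta (a : A) (j : ℕ) :
    (∀ m, j * k < m → ((sig k ^ j) (fun m => if m = 0 then a else 0)) m = 0) ∧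
    ((sig k ^ j) (fun m => if m = 0 then a else 0)) (j * k) = ((-1 : ℤ) ^ j) • a := by
  induction j with
  | zero =>
      constructor
      · intro m hm
        simp only [pow_zero, AddAut.one_apply]
        rw [if_neg (by omega)]
      · simp
  | succ j ih =>
      have hs : ∀ G : ℕ → A, (sig k ^ (j+1)) G = sig k ((sig k ^ j) G) := by
        intro G
        rw [pow_succ', AddAut.mul_apply]
      have hk0 := kpos k
      constructor
      · intro m hm
        rw [hs, sig_apply]
        simp only [sigFun, shk]
        have hjk : (j+1)*k = j*k + k := by ring
        rw [ih.1 m (by omega), if_pos (by omega), ih.1 (m - k) (by omega)]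
        simp
      · rw [hs, sig_apply]
        simp only [sigFun, shk]
        rw [ih.1 ((j+1)*k) (by nlinarith), if_pos (by nlinarith),
          show (j+1)*k - k = j * k by ring_nf; omega, ih.2, pow_succ]
        simp [neg_smul]

lemma sig_pow_poly_high (m : ℕ) (q : Fin k → A) :
    ∀ n, (m + 1) * k ≤ n → ((sig k ^ m) (poly k q)) n = 0 := by
  induction m with
  | zero =>
      intro n hn
      simp only [pow_zero, AddAut.one_apply, poly, AddMonoidHom.coe_mk, ZeroHom.coe_mk]
      rw [dif_neg (by omega)]
  | succ m ih =>
      intro n hn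
      have hk0 := kpos k
      rw [pow_succ', AddAut.mul_apply, sig_apply]
      simp only [sigFun, shk]
      have hjk : (m+1+1)*k = (m+1)*k + k := by ring
      have hjk2 : (m+1)*k = m*k + k := by ring
      rw [ih n (by omega), if_pos (by omega), ih (n - k) (by omega)]
      simp

lemma sig_pow_poly_top (m : ℕ) (q : Fin k → A) (i : Fin k) :
    ((sig k ^ m) (poly k q)) (m * k + (i : ℕ)) = ((-1 : ℤ)^m) • q i := by
  induction m with
  | zero =>
      simp only [pow_zero, AddAut.one_apply, poly, AddMonoidHom.coe_mk, ZeroHom.coe_mk,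
        Nat.zero_mul, Nat.zero_add]
      rw [one_smul, dif_pos i.isLt]
  | succ m ih =>
      have hk0 := kpos k
      rw [pow_succ', AddAut.mul_apply, sig_apply]
      simp only [sigFun, shk]
      rw [sig_pow_poly_high k m q _ (by nlinarith), if_pos (by nlinarith),
        show (m+1) * k + (i:ℕ) - k = m * k + (i:ℕ) by ring_nf; omega, ih, pow_succ]
      simp [neg_smul]

lemma Gmap_eq_zero_iff (f : ℤ →₀ (Fin k → A)) (hf : Gmap k f = 0) : f = 0 := by
  by_contra hne
  have hsupp : f.support.Nonempty := Finsupp.support_nonempty_iff.mpr hne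
  set m0 := f.support.min' hsupp with hm0
  set f' := Finsupp.domCongr (M := Fin k → A) (Equiv.addRight (-m0)) f with hf'def
  have hG' : Gmap k f' = 0 := by rw [hf'def, Gmap_shift, hf, map_zero]
  have happ : ∀ b, f' b = f (b + m0) := by
    intro b
    rw [hf'def, Finsupp.domCongr_apply, Finsupp.equivMapDomain_apply]
    congr 1
    simp only [Equiv.addRight_symm_apply]
    ring
  have hne' : f'.support.Nonempty := by
    refine Finsupp.support_nonempty_iff.mpr fun h => hne ?_
    exact (Finsupp.domCongr (M := Fin k → A) (Equiv.addRight (-m0))).injective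
      (by rw [map_zero, ← hf'def, h])
  have hpos : ∀ b ∈ f'.support, 0 ≤ b := by
    intro b hb
    have hb2 : b + m0 ∈ f.support := by
      rw [Finsupp.mem_support_iff] at hb ⊢
      rwa [← happ b]
    have := f.support.min'_le _ hb2
    omega
  set M := f'.support.max' hne' with hM
  have hMmem : M ∈ f'.support := f'.support.max'_mem hne'
  have hM0 : 0 ≤ M := hpos M hMmem
  obtain ⟨Mn, hMn⟩ : ∃ Mn : ℕ, M = (Mn : ℤ) := ⟨M.toNat, (Int.toNat_of_nonneg hM0).symm⟩
  have hq : f' M ≠ 0 := Finsupp.mem_support_iff.mp hMmem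
  obtain ⟨i, hi⟩ : ∃ i : Fin k, f' M i ≠ 0 := by
    by_contra h
    push_neg at h
    exact hq (funext fun i => h i)
  rw [hMn] at hi
  have heval : Gmap k f' (Mn * k + (i : ℕ)) = 0 := by rw [hG']; rfl
  rw [Gmap_apply, Finsupp.sum, Finset.sum_apply] at heval
  rw [Finset.sum_eq_single M (fun m hm hne2 => ?_) (fun h => absurd hMmem h)] at heval
  · rw [hMn, zpow_natCast, sig_pow_poly_top] at heval
    exact neg_one_pow_smul_ne_zero hi Mn heval
  · have h0 : 0 ≤ m := hpos m hm
    obtain ⟨mn, rfl⟩ : ∃ mn : ℕ, m = (mn : ℤ) := ⟨m.toNat, (Int.toNat_of_nonneg h0).symm⟩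
    have hlt : mn < Mn := by
      have := f'.support.le_max' _ hm
      omega
    rw [zpow_natCast]
    apply sig_pow_poly_high
    have : (mn + 1) * k ≤ Mn * k := Nat.mul_le_mul_right k (by omega)
    omega

lemma phiMap_injective [Nontrivial A] : Function.Injective (phiMap (A := A) k) := by
  rw [injective_iff_map_eq_one]
  intro g hg
  have hlact : ∀ u : List A, lact k g u = u := by
    intro u
    have := DFunLike.congr_fun hg u
    rwa [Equiv.Perm.coe_one, id_eq] at this
  have hT : ∀ (F : ℕ → A) (n : ℕ), Tact k g F n = F n := by
    intro F n
    set u := List.ofFn (fun i : Fin (n+1) => F i) with hu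
    have hlen : u.length = n + 1 := by simp [hu]
    have hextu : ∀ m ≤ n, ext u m = F m := by
      intro m hm
      rw [ext_lt u m (by omega)]
      simp only [hu, List.getElem_ofFn]
    have hn' : n < (lact k g u).length := by rw [lact_length, hlen]; omega
    have h2 : (lact k g u)[n] = Tact k g (ext u) n := lact_getElem k g u n hn'
    have h3 : (lact k g u)[n] = u[n]'(by omega) := List.getElem_of_eq (hlact u) hn'
    have h4 : u[n]'(by omega) = F n := by simp only [hu, List.getElem_ofFn]
    have h5 : Tact k g (ext u) n = Tact k g F n :=
      Tact_loc k g n _ _ (fun m hm => hextu m hm)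
    rw [← h5, ← h2, h3, h4]
  have hGz : Gmap k (Multiplicative.toAdd g.left) = 0 := by
    funext n
    have := hT 0 n
    simp only [Tact, map_zero, Pi.sub_apply, Pi.zero_apply, zero_sub, neg_eq_zero] at this ⊢
    exact this
  have hright : g.right = 1 := by
    by_contra hz
    have hSF : ∀ F : ℕ → A, (sig k ^ Multiplicative.toAdd g.right) F = F := by
      intro F
      funext n
      have := hT F n
      simp only [Tact, hGz, Pi.sub_apply, Pi.zero_apply, sub_zero] at this
      exact this
    have hone : (sig k ^ Multiplicative.toAdd g.right : AddAut (ℕ → A)) = 1 :=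
      AddEquiv.ext hSF
    set z := Multiplicative.toAdd g.right with hzdef
    have hz0 : z ≠ 0 := by
      intro h
      exact hz (by rw [← ofAdd_toAdd g.right, ← hzdef, h, ofAdd_zero])
    set d := z.natAbs with hd
    have hd0 : d ≠ 0 := Int.natAbs_ne_zero.mpr hz0
    have hnat : (sig k ^ (d : ℤ) : AddAut (ℕ → A)) = 1 := by
      rcases Int.natAbs_eq z with h | h
      · rw [← h]
        exact hone
      · have hdz : (d : ℤ) = -z := by omega
        rw [hdz, zpow_neg, hone, inv_one]
    rw [zpow_natCast] at hnat
    obtain ⟨a, ha⟩ := exists_ne (0 : A)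
    have hspec := (sig_pow_delta k a d).2
    rw [hnat] at hspec
    simp only [AddAut.one_apply] at hspec
    rw [if_neg (Nat.mul_ne_zero hd0 (NeZero.ne k))] at hspec
    exact neg_one_pow_smul_ne_zero ha d hspec.symm
  have hleft : g.left = 1 := by
    have := Gmap_eq_zero_iff k _ hGz
    rw [← ofAdd_toAdd g.left, this, ofAdd_zero]
  exact SemidirectProduct.ext hleft hright


/-! ### The generators generate -/

lemma gen_eq (q : Fin k → A) :
    gen k q = SemidirectProduct.inl (Multiplicative.ofAdd (Finsupp.single (0:ℤ) q))
      * SemidirectProduct.inr (Multiplicative.ofAdd (1:ℤ)) := by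
  have h := SemidirectProduct.inl_left_mul_inr_right (gen k q)
  rw [← h]
  rfl

lemma wphi_single (n : ℤ) (q : Fin k → A) :
    wphi k (Multiplicative.ofAdd n) (Multiplicative.ofAdd (Finsupp.single (0:ℤ) q))
      = Multiplicative.ofAdd (Finsupp.single n q) := by
  have h1 : wphi k (Multiplicative.ofAdd n)
      = ((psi k : MulAut (Multiplicative (ℤ →₀ (Fin k → A)))) ^ n) := by
    rw [zpowersHom_apply]
    rfl
  rw [h1]
  have h2 := psi_pow k n (Multiplicative.ofAdd (Finsupp.single (0:ℤ) q))
  apply Multiplicative.toAdd.injective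
  rw [h2]
  simp only [toAdd_ofAdd, Finsupp.domCongr_apply, Finsupp.equivMapDomain_single,
    Equiv.coe_addRight, zero_add]

lemma closure_gen_eq_top :
    Subgroup.closure (Set.range (gen (A := A) k)) = ⊤ := by
  rw [eq_top_iff]
  rintro x -
  set H := Subgroup.closure (Set.range (gen (A := A) k)) with hH
  have hmem : ∀ q : Fin k → A, gen k q ∈ H := fun q => Subgroup.subset_closure ⟨q, rfl⟩
  have hgen0 : gen k (0 : Fin k → A)
      = SemidirectProduct.inr (φ := wphi (A := A) k) (Multiplicative.ofAdd (1:ℤ)) := by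
    apply SemidirectProduct.ext
    · show Multiplicative.ofAdd (Finsupp.single (0:ℤ) (0 : Fin k → A)) = 1
      rw [Finsupp.single_zero, ofAdd_zero]
    · rfl
  have ht : SemidirectProduct.inr (φ := wphi (A := A) k) (Multiplicative.ofAdd (1:ℤ)) ∈ H := by
    rw [← hgen0]; exact hmem 0
  have htn : ∀ n : ℤ, SemidirectProduct.inr (φ := wphi (A := A) k) (Multiplicative.ofAdd n) ∈ H := by
    intro n
    have h1 : (SemidirectProduct.inr (φ := wphi (A := A) k) (Multiplicative.ofAdd (1:ℤ))) ^ n ∈ H :=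
      H.zpow_mem ht n
    rwa [← map_zpow, show (Multiplicative.ofAdd (1:ℤ)) ^ n = Multiplicative.ofAdd n by
      rw [← ofAdd_zsmul]; norm_num] at h1
  have hsingle0 : ∀ q : Fin k → A,
      SemidirectProduct.inl (φ := wphi (A := A) k) (Multiplicative.ofAdd (Finsupp.single (0:ℤ) q)) ∈ H := by
    intro q
    have h1 : SemidirectProduct.inl (φ := wphi (A := A) k)
        (Multiplicative.ofAdd (Finsupp.single (0:ℤ) q))
        = gen k q * (SemidirectProduct.inr (Multiplicative.ofAdd (1:ℤ)))⁻¹ := by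
      rw [gen_eq, mul_inv_cancel_right]
    rw [h1]
    exact H.mul_mem (hmem q) (H.inv_mem ht)
  have hsinglen : ∀ (n : ℤ) (q : Fin k → A),
      SemidirectProduct.inl (φ := wphi (A := A) k) (Multiplicative.ofAdd (Finsupp.single n q)) ∈ H := by
    intro n q
    have h1 := SemidirectProduct.inl_aut (φ := wphi (A := A) k) (Multiplicative.ofAdd n)
      (Multiplicative.ofAdd (Finsupp.single (0:ℤ) q))
    rw [wphi_single, map_inv] at h1
    rw [h1]
    exact H.mul_mem (H.mul_mem (htn n) (hsingle0 q)) (H.inv_mem (htn n))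
  have hinl : ∀ f : ℤ →₀ (Fin k → A),
      SemidirectProduct.inl (φ := wphi (A := A) k) (Multiplicative.ofAdd f) ∈ H := by
    intro f
    induction f using Finsupp.induction with
    | zero =>
        rw [ofAdd_zero, map_one]
        exact H.one_mem
    | single_add a b f _ _ ih =>
        rw [ofAdd_add, map_mul]
        exact H.mul_mem (hsinglen a b) ih
  rw [← SemidirectProduct.inl_left_mul_inr_right x]
  refine H.mul_mem ?_ ?_
  · have := hinl (Multiplicative.toAdd x.left)
    rwa [ofAdd_toAdd] at this
  · have := htn (Multiplicative.toAdd x.right)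
    rwa [ofAdd_toAdd] at this

end Stmt19

/-- For a nontrivial finite abelian group `A`, the group `B(k, A)` generated by the tree
automorphisms `𝒜_q` of the Mealy automaton `M(B_k(A), χ_k(A))` is isomorphic to the wreath
product `A^k ≀ ℤ`. -/



theorem stmt19 {A : Type*} [AddCommGroup A] [Fintype A] [Nontrivial A] [DecidableEq A]
    (k : ℕ) [NeZero k]
    (e : (Fin k → A) → Equiv.Perm (List A))
    (he : ∀ (q : Fin k → A) (u : List A),
      e q u = mealyMap (dbStep A k) (fun p x => x - p 0) q u) :
    Nonempty (↥(Subgroup.closure (Set.range e)) ≃* wreathAkZ A k) := by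
  have hrange : Subgroup.closure (Set.range e) = (Stmt19.phiMap (A := A) k).range := by
    have h1 : Set.range e = ⇑(Stmt19.phiMap (A := A) k) '' Set.range (Stmt19.gen (A := A) k) := by
      rw [← Set.range_comp]
      exact congrArg Set.range (funext fun q => (Stmt19.phiMap_gen k e he q).symm)
    rw [h1, ← MonoidHom.map_closure, Stmt19.closure_gen_eq_top, ← MonoidHom.range_eq_map]
  have hinj := Stmt19.phiMap_injective (A := A) k
  exact ⟨(MulEquiv.subgroupCongr hrange).trans (MonoidHom.ofInjective hinj).symm⟩
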